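/- For every a ∈ [0,1), the exponential integral kernel E satisfies ∫_{-∞}^∞ E(z)·e^{-az} dz = artanh(a)/a (with the value 1 at a = 0). -/

import Mathlib

open MeasureTheory Set Real intervalIntegral

noncomputable def Ek (x : ℝ) : ℝ := (1 / 2) * ∫ t in Set.Ioi |x|, Real.exp (-t) / t

lemma fubini1 {a : ℝ} (ha : 0 ≤ a) (ha1 : a < 1) :
    (∫ z : ℝ, Ek z * Real.exp (-a*z)) =
      (1/2) * ∫ t in Set.Ioi (0:ℝ), ∫ z in Set.Ioo (-t) t,
        Real.exp (-t)/t * Real.exp (-a*z) := by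
  have hb : (0:ℝ) < 1 - a := by linarith
  set f : ℝ → ℝ → ℝ := fun z t =>
    Set.indicator {x : ℝ × ℝ | |x.1| < x.2}
      (fun x => Real.exp (-x.2)/x.2 * Real.exp (-a*x.1)) (z, t) with hf
  have hS : MeasurableSet {x : ℝ × ℝ | |x.1| < x.2} :=
    measurableSet_lt (measurable_fst.abs) measurable_snd
  have hmeas : Measurable (Function.uncurry f) := by
    apply Measurable.indicator _ hS
    exact ((Real.continuous_exp.comp continuous_snd.neg).measurable.div
      continuous_snd.measurable).mul
      (Real.continuous_exp.comp (continuous_const.mul continuous_fst)).measurable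
  have hnn : ∀ z t, 0 ≤ f z t := by
    intro z t
    apply Set.indicator_nonneg
    rintro ⟨z', t'⟩ hx
    have ht' : 0 < t' := lt_of_le_of_lt (abs_nonneg z') hx
    have : 0 ≤ Real.exp (-t') / t' := by positivity
    positivity
  -- sections in z for fixed t
  have hsec : ∀ t : ℝ, (fun z => f z t) =
      Set.indicator (Set.Ioo (-t) t) (fun z => Real.exp (-t)/t * Real.exp (-a*z)) := by
    intro t; funext z
    simp only [hf]
    rw [Set.indicator_apply, Set.indicator_apply]
    by_cases hz : z ∈ Set.Ioo (-t) t
    · rw [if_pos hz, if_pos]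
      exact abs_lt.mpr ⟨hz.1, hz.2⟩
    · rw [if_neg hz, if_neg]
      intro hmem
      exact hz ⟨(abs_lt.mp hmem).1, (abs_lt.mp hmem).2⟩
  -- sections integrable
  have hsecInt : ∀ t : ℝ, Integrable (fun z => f z t) := by
    intro t
    rw [hsec t, integrable_indicator_iff measurableSet_Ioo]
    apply IntegrableOn.mono_set _ Set.Ioo_subset_Icc_self
    apply Continuous.integrableOn_Icc
    exact continuous_const.mul (Real.continuous_exp.comp (continuous_const.mul continuous_id))
  -- value of z-integral
  have hval : ∀ t : ℝ, (∫ z, f z t) =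
      Set.indicator (Set.Ioi (0:ℝ))
        (fun t => ∫ z in Set.Ioo (-t) t, Real.exp (-t)/t * Real.exp (-a*z)) t := by
    intro t
    rw [hsec t, MeasureTheory.integral_indicator measurableSet_Ioo]
    by_cases ht : t ∈ Set.Ioi (0:ℝ)
    · rw [Set.indicator_of_mem ht]
    · rw [Set.indicator_of_notMem ht]
      have : Set.Ioo (-t) t = (∅ : Set ℝ) := by
        apply Set.Ioo_eq_empty
        simp only [Set.mem_Ioi, not_lt] at ht
        intro hlt; linarith
      rw [this]
      simp
  -- bound on the z-integral
  have hbound : ∀ t : ℝ, |∫ z, f z t| ≤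
      Set.indicator (Set.Ioi (0:ℝ)) (fun t => 2 * Real.exp (-((1-a)*t))) t := by
    intro t
    by_cases ht : t ∈ Set.Ioi (0:ℝ)
    · have ht0 : (0:ℝ) < t := ht
      rw [hval t, Set.indicator_of_mem ht, Set.indicator_of_mem ht]
      have key : ‖∫ z in Set.Ioo (-t) t, Real.exp (-t)/t * Real.exp (-a*z)‖ ≤
          (Real.exp (-t)/t * Real.exp (a*t)) * (volume (Set.Ioo (-t) t)).toReal := by
        apply norm_setIntegral_le_of_norm_le_const; swap
        · intro z hz
          rw [Real.norm_of_nonneg (by positivity)]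
          apply mul_le_mul_of_nonneg_left _ (by positivity)
          apply Real.exp_le_exp.mpr
          nlinarith [hz.1, hz.2]
        · rw [Real.volume_Ioo]; exact ENNReal.ofReal_lt_top
      rw [Real.norm_eq_abs] at key
      refine key.trans ?_
      rw [Real.volume_Ioo, ENNReal.toReal_ofReal (by linarith)]
      have : (Real.exp (-t)/t * Real.exp (a*t)) * (t - -t) =
          2 * (Real.exp (-t) * Real.exp (a*t)) := by
        field_simp
        ring
      rw [this, ← Real.exp_add]
      apply le_of_eq
      congr 1
      ring
    · rw [hval t, Set.indicator_of_notMem ht, Set.indicator_of_notMem ht]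
      simp
  -- integrability of t ↦ ∫ z ‖f z t‖
  have hmeasInt : AEStronglyMeasurable (fun t => ∫ z, f z t) (volume : Measure ℝ) :=
    (hmeas.stronglyMeasurable.integral_prod_left').aestronglyMeasurable
  have hG : Integrable (Set.indicator (Set.Ioi (0:ℝ))
      (fun t => 2 * Real.exp (-((1-a)*t)))) := by
    rw [integrable_indicator_iff measurableSet_Ioi]
    have h2 := (exp_neg_integrableOn_Ioi 0 hb).const_mul 2
    simp only [neg_mul] at h2
    exact h2
  have hIntg : Integrable (fun t => ∫ z, f z t) := by
    apply Integrable.mono hG hmeasInt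
    apply Filter.Eventually.of_forall
    intro t
    rw [Real.norm_eq_abs, Real.norm_eq_abs]
    refine (hbound t).trans ?_
    exact le_abs_self _
  have hnormInt : Integrable (fun t => ∫ z, ‖f z t‖) := by
    have : (fun t => ∫ z, ‖f z t‖) = fun t => ∫ z, f z t := by
      funext t
      exact MeasureTheory.integral_congr_ae (Filter.Eventually.of_forall fun z =>
        Real.norm_of_nonneg (hnn z t))
    rw [this]; exact hIntg
  have hInt : Integrable (Function.uncurry f) ((volume : Measure ℝ).prod volume) := by
    rw [integrable_prod_iff' hmeas.aestronglyMeasurable]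
    exact ⟨Filter.Eventually.of_forall hsecInt, hnormInt⟩
  have hswap := integral_integral_swap hInt
  -- LHS
  have hL : (∫ z, ∫ t, f z t) = 2 * ∫ z : ℝ, Ek z * Real.exp (-a*z) := by
    rw [← MeasureTheory.integral_const_mul]
    congr 1; funext z
    have e1 : (fun t => f z t) =
        Set.indicator (Set.Ioi |z|) (fun t => Real.exp (-t)/t * Real.exp (-a*z)) := by
      funext t
      simp only [hf]
      rw [Set.indicator_apply, Set.indicator_apply]
      by_cases ht : t ∈ Set.Ioi |z|
      · have hm : (z,t) ∈ {x : ℝ×ℝ | |x.1| < x.2} := ht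
        rw [if_pos hm, if_pos ht]
      · have hm : (z,t) ∉ {x : ℝ×ℝ | |x.1| < x.2} := ht
        rw [if_neg hm, if_neg ht]
    rw [e1, MeasureTheory.integral_indicator measurableSet_Ioi,
      MeasureTheory.integral_mul_const]
    rw [Ek]
    ring
  -- RHS
  have hR : (∫ t, ∫ z, f z t) =
      ∫ t in Set.Ioi (0:ℝ), ∫ z in Set.Ioo (-t) t,
        Real.exp (-t)/t * Real.exp (-a*z) := by
    rw [← MeasureTheory.integral_indicator measurableSet_Ioi]
    congr 1; funext t
    exact hval t
  rw [← hR, ← hswap, hL]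
  ring

lemma frullani {p q : ℝ} (hp : 0 < p) (hpq : p < q) :
    ∫ t in Set.Ioi (0:ℝ), (Real.exp (-(p*t)) - Real.exp (-(q*t)))/t = Real.log (q/p) := by
  have hq : 0 < q := hp.trans hpq
  set h : ℝ → ℝ → ℝ := fun t s =>
    Set.indicator (Set.Ioi (0:ℝ) ×ˢ Set.Ioo p q) (fun x => Real.exp (-(x.2 * x.1))) (t, s) with hh
  have hmeas : Measurable (Function.uncurry h) := by
    apply Measurable.indicator
    · exact (Real.continuous_exp.comp (continuous_snd.mul continuous_fst).neg).measurable
    · exact measurableSet_Ioi.prod measurableSet_Ioo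
  have hnn : ∀ t s, 0 ≤ h t s := by
    intro t s
    apply Set.indicator_nonneg
    intro x _; positivity
  -- sections in t, for fixed s
  have hsec : ∀ s ∈ Set.Ioo p q, (fun t => h t s) =
      Set.indicator (Set.Ioi (0:ℝ)) (fun t => Real.exp (-(s * t))) := by
    intro s hs; funext t
    simp only [hh]
    rw [Set.indicator_apply, Set.indicator_apply]
    by_cases ht : t ∈ Set.Ioi (0:ℝ) <;> simp [Set.mem_prod, ht, hs]
  have hsec0 : ∀ s ∉ Set.Ioo p q, (fun t => h t s) = fun _ => (0:ℝ) := by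
    intro s hs; funext t
    exact Set.indicator_of_notMem (fun hmem => hs hmem.2) _
  -- inner integral over t
  have hval : ∀ s : ℝ, (∫ t, h t s) =
      Set.indicator (Set.Ioo p q) (fun s' => s'⁻¹) s := by
    intro s
    by_cases hs : s ∈ Set.Ioo p q
    · rw [hsec s hs, MeasureTheory.integral_indicator measurableSet_Ioi,
        Set.indicator_of_mem hs]
      have hs0 : 0 < s := hp.trans hs.1
      have := integral_comp_mul_right_Ioi (fun x => Real.exp (-x)) 0 hs0
      simp only [zero_mul, integral_exp_neg_Ioi, neg_zero, Real.exp_zero, smul_eq_mul,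
        mul_one] at this
      calc ∫ t in Set.Ioi (0:ℝ), Real.exp (-(s * t))
          = ∫ t in Set.Ioi (0:ℝ), Real.exp (-(t * s)) := by
            congr 1; ext t; rw [mul_comm]
        _ = s⁻¹ := this
    · rw [hsec0 s hs, Set.indicator_of_notMem hs]
      simp
  -- integrability of sections
  have hsecInt : ∀ s : ℝ, Integrable (fun t => h t s) := by
    intro s
    by_cases hs : s ∈ Set.Ioo p q
    · rw [hsec s hs, integrable_indicator_iff measurableSet_Ioi]
      simpa [neg_mul] using exp_neg_integrableOn_Ioi 0 (hp.trans hs.1)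
    · rw [hsec0 s hs]; exact integrable_zero _ _ _
  -- integrability of s ↦ ∫ t ‖h t s‖
  have hnormval : (fun s => ∫ t, ‖h t s‖) = Set.indicator (Set.Ioo p q) (fun s' => s'⁻¹) := by
    funext s
    rw [← hval s]
    exact MeasureTheory.integral_congr_ae (Filter.Eventually.of_forall fun t => Real.norm_of_nonneg (hnn t s))
  have hnormInt : Integrable (fun s => ∫ t, ‖h t s‖) := by
    rw [hnormval, integrable_indicator_iff measurableSet_Ioo]
    apply IntegrableOn.mono_set _ Set.Ioo_subset_Icc_self
    apply ContinuousOn.integrableOn_compact isCompact_Icc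
    apply ContinuousOn.inv₀ continuousOn_id
    intro x hx; exact (hp.trans_le hx.1).ne'
  -- integrability of uncurry h
  have hInt : Integrable (Function.uncurry h) ((volume : Measure ℝ).prod volume) := by
    rw [integrable_prod_iff' hmeas.aestronglyMeasurable]
    exact ⟨Filter.Eventually.of_forall hsecInt, hnormInt⟩
  -- swap
  have hswap := integral_integral_swap hInt
  -- LHS of swap
  have hL : (∫ t, ∫ s, h t s) =
      ∫ t in Set.Ioi (0:ℝ), (Real.exp (-(p*t)) - Real.exp (-(q*t)))/t := by
    have e1 : (fun t => ∫ s, h t s) =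
        Set.indicator (Set.Ioi (0:ℝ)) (fun t => (Real.exp (-(p*t)) - Real.exp (-(q*t)))/t) := by
      funext t
      by_cases ht : t ∈ Set.Ioi (0:ℝ)
      · rw [Set.indicator_of_mem ht]
        have ht0 : (0:ℝ) < t := ht
        have e2 : (fun s => h t s) =
            Set.indicator (Set.Ioo p q) (fun s => Real.exp (-(s * t))) := by
          funext s
          simp only [hh]
          rw [Set.indicator_apply, Set.indicator_apply]
          by_cases hs : s ∈ Set.Ioo p q <;> simp [Set.mem_prod, ht, hs]
        rw [e2, MeasureTheory.integral_indicator measurableSet_Ioo,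
          ← integral_Ioc_eq_integral_Ioo,
          ← intervalIntegral.integral_of_le hpq.le]
        have hmul : ∀ s : ℝ, -(s*t) = -t*s := fun s => by ring
        simp only [hmul]
        rw [intervalIntegral.integral_comp_mul_left (fun x => Real.exp x)
          (neg_ne_zero.mpr ht0.ne'), integral_exp, smul_eq_mul]
        field_simp [ht0.ne']
        ring
      · rw [Set.indicator_of_notMem ht]
        have : (fun s => h t s) = fun _ => (0:ℝ) := by
          funext s
          exact Set.indicator_of_notMem (fun hmem => ht hmem.1) _
        rw [this]; simp
    rw [e1, MeasureTheory.integral_indicator measurableSet_Ioi]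
  -- RHS of swap
  have hR : (∫ s, ∫ t, h t s) = Real.log (q/p) := by
    calc (∫ s, ∫ t, h t s) = ∫ s, Set.indicator (Set.Ioo p q) (fun s' => s'⁻¹) s := by
          congr 1; funext s; exact hval s
      _ = ∫ s in Set.Ioo p q, s⁻¹ := MeasureTheory.integral_indicator measurableSet_Ioo
      _ = Real.log (q/p) := by
          rw [← integral_Ioc_eq_integral_Ioo, ← integral_of_le hpq.le]
          apply integral_inv
          rw [Set.uIcc_of_le hpq.le]
          intro hmem; exact absurd hmem.1 (by linarith)
  rw [← hL, hswap, hR]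

/-- The inverse hyperbolic tangent artanh(a) = (1/2)·log((1+a)/(1-a)). -/
noncomputable def artanh (a : ℝ) : ℝ := (1 / 2) * Real.log ((1 + a) / (1 - a))

/-- for a ∈ [0,1), ∫_ℝ E(z)e^{-az} dz = artanh(a)/a (value 1 at a = 0). -/
theorem stmt3 : ∀ a : ℝ, 0 ≤ a → a < 1 →
    (∫ z : ℝ, Ek z * Real.exp (-a * z)) = if a = 0 then 1 else _root_.artanh a / a := by
  intro a ha0 ha1
  rw [fubini1 ha0 ha1]
  by_cases h : a = 0
  · subst h
    rw [if_pos rfl]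
    have key : ∀ t ∈ Set.Ioi (0:ℝ),
        (∫ z in Set.Ioo (-t) t, Real.exp (-t)/t * Real.exp (-(0:ℝ)*z)) =
          2 * Real.exp (-t) := by
      intro t ht
      have ht0 : (0:ℝ) < t := ht
      simp only [neg_zero, zero_mul, Real.exp_zero, mul_one]
      rw [setIntegral_const, Real.volume_real_Ioo_of_le (by linarith),
        smul_eq_mul]
      field_simp
      ring
    rw [setIntegral_congr_fun measurableSet_Ioi key, MeasureTheory.integral_const_mul,
      integral_exp_neg_Ioi_zero]
    norm_num
  · have ha : 0 < a := lt_of_le_of_ne ha0 (Ne.symm h)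
    have h1a : (0:ℝ) < 1 - a := by linarith
    have hlt : (1:ℝ) - a < 1 + a := by linarith
    rw [if_neg h]
    have key : ∀ t ∈ Set.Ioi (0:ℝ),
        (∫ z in Set.Ioo (-t) t, Real.exp (-t)/t * Real.exp (-a*z)) =
          (1/a) * ((Real.exp (-((1-a)*t)) - Real.exp (-((1+a)*t)))/t) := by
      intro t ht
      have ht0 : (0:ℝ) < t := ht
      rw [MeasureTheory.integral_const_mul, ← integral_Ioc_eq_integral_Ioo,
        ← intervalIntegral.integral_of_le (by linarith : -t ≤ t),
        intervalIntegral.integral_comp_mul_left (fun x => Real.exp x)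
          (neg_ne_zero.mpr ha.ne'), integral_exp, smul_eq_mul]
      rw [show -a * -t = a*t by ring, show -((1-a)*t) = -t + a*t by ring,
        show -((1+a)*t) = -t + -(a*t) by ring, Real.exp_add, Real.exp_add,
        show -a*t = -(a*t) by ring]
      field_simp
      ring
    rw [setIntegral_congr_fun measurableSet_Ioi key, MeasureTheory.integral_const_mul,
      frullani h1a hlt, _root_.artanh]
    have hne : (1:ℝ) - a ≠ 0 := h1a.ne'
    field_simp
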